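/- arXiv:0906.4271 — 7 statements merged into one kernel-verified Lean document; each statement's English description precedes it below -/
import Mathlib

section
/- Let X be a finite set and let 𝒞 be a collection of 3-element subsets of X with ∪𝒞 = X. Suppose 𝒞 satisfies: for every nonempty subcollection 𝒞' ⊆ 𝒞, |∪𝒞'| ≥ |𝒞'| + 2. Then the collection 𝒫 of nonempty subcollections 𝒞' ⊆ 𝒞 satisfying |∪𝒞'| = |𝒞'| + 2 forms a patchwork: if 𝒞₁, 𝒞₂ ∈ 𝒫 and 𝒞₁ ∩ 𝒞₂ ≠ ∅, then 𝒞₁ ∩ 𝒞₂ ∈ 𝒫 and 𝒞₁ ∪ 𝒞₂ ∈ 𝒫. -/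
theorem stmt_0 {α : Type*} [DecidableEq α] (X : Finset α) (C : Finset (Finset α))
    (hcard : ∀ S ∈ C, S.card = 3) (hunion : C.sup id = X)
    (hall : ∀ C' ⊆ C, C'.Nonempty → (C'.sup id).card ≥ C'.card + 2)
    (C1 C2 : Finset (Finset α))
    (h1 : C1 ⊆ C ∧ C1.Nonempty ∧ (C1.sup id).card = C1.card + 2)
    (h2 : C2 ⊆ C ∧ C2.Nonempty ∧ (C2.sup id).card = C2.card + 2)
    (hint : (C1 ∩ C2).Nonempty) :
    ((C1 ∩ C2) ⊆ C ∧ (C1 ∩ C2).Nonempty ∧ ((C1 ∩ C2).sup id).card = (C1 ∩ C2).card + 2) ∧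
    ((C1 ∪ C2) ⊆ C ∧ (C1 ∪ C2).Nonempty ∧ ((C1 ∪ C2).sup id).card = (C1 ∪ C2).card + 2) := by
  obtain ⟨h1s, h1n, h1c⟩ := h1
  obtain ⟨h2s, h2n, h2c⟩ := h2
  have hiS : C1 ∩ C2 ⊆ C := fun x hx => h1s (Finset.mem_of_mem_inter_left hx)
  have huS : C1 ∪ C2 ⊆ C := Finset.union_subset h1s h2s
  have hun : (C1 ∪ C2).Nonempty := h1n.mono Finset.subset_union_left
  -- sup of union
  have hsupu : (C1 ∪ C2).sup id = C1.sup id ∪ C2.sup id := by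
    simpa using Finset.sup_union (s₁ := C1) (s₂ := C2) (f := id)
  -- sup of intersection subset
  have hsupi : (C1 ∩ C2).sup id ⊆ C1.sup id ∩ C2.sup id := by
    rw [← Finset.inf_eq_inter, ← Finset.le_iff_subset]
    exact le_inf (Finset.sup_mono Finset.inter_subset_left)
      (Finset.sup_mono Finset.inter_subset_right)
  have key : ((C1 ∪ C2).sup id).card + ((C1 ∩ C2).sup id).card
      ≤ C1.card + C2.card + 4 := by
    have h1' : ((C1 ∪ C2).sup id).card + ((C1 ∩ C2).sup id).card
        ≤ (C1.sup id ∪ C2.sup id).card + (C1.sup id ∩ C2.sup id).card := by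
      rw [hsupu]
      exact Nat.add_le_add le_rfl (Finset.card_le_card hsupi)
    rw [Finset.card_union_add_card_inter, h1c, h2c] at h1'
    omega
  have hlu := hall (C1 ∪ C2) huS hun
  have hli := hall (C1 ∩ C2) hiS hint
  have hcc : (C1 ∪ C2).card + (C1 ∩ C2).card = C1.card + C2.card :=
    Finset.card_union_add_card_inter C1 C2
  refine ⟨⟨hiS, hint, ?_⟩, ⟨huS, hun, ?_⟩⟩ <;> omega
end

section
/- Let 𝒞₁, 𝒞₂ be finite collections of finite sets. Then |∪(𝒞₁ ∩ 𝒞₂)| + |∪(𝒞₁ ∪ 𝒞₂)| ≤ |(∪𝒞₁) ∩ (∪𝒞₂)| + |(∪𝒞₁) ∪ (∪𝒞₂)| = |∪𝒞₁| + |∪𝒞₂|. -/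
theorem stmt_1 {α : Type*} [DecidableEq α] (C1 C2 : Finset (Finset α)) :
    (((C1 ∩ C2).sup id).card + ((C1 ∪ C2).sup id).card ≤
      ((C1.sup id) ∩ (C2.sup id)).card + ((C1.sup id) ∪ (C2.sup id)).card) ∧
    ((C1.sup id) ∩ (C2.sup id)).card + ((C1.sup id) ∪ (C2.sup id)).card =
      (C1.sup id).card + (C2.sup id).card := by
  constructor
  · have h1 : (C1 ∩ C2).sup id ⊆ (C1.sup id) ∩ (C2.sup id) :=
      Finset.sup_le fun s hs => _root_.le_inf
        (Finset.le_sup (Finset.mem_of_mem_inter_left hs))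
        (Finset.le_sup (Finset.mem_of_mem_inter_right hs))
    have h2 : (C1 ∪ C2).sup id = (C1.sup id) ∪ (C2.sup id) := Finset.sup_union
    rw [h2]
    exact Nat.add_le_add (Finset.card_le_card h1) le_rfl
  · exact Finset.card_inter_add_card_union _ _
end

section
/- Let T be a finite tree whose leaf set is X, with all non-leaf vertices of degree 3, and let 𝒞 be a collection of 3-element subsets of X with ∪𝒞 = X such that the map S ↦ med_T(S) from 𝒞 to the interior vertices of T is injective. Then for every nonempty subcollection 𝒞' ⊆ 𝒞, |∪𝒞'| ≥ |𝒞'| + 2. -/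
/-- `m` is the median of the finite vertex set `S` in the graph `T`:
it lies on the (shortest) path between every pair of distinct elements of `S`. -/
def isMedianOf {V : Type*} (T : SimpleGraph V) (S : Finset V) (m : V) : Prop :=
  ∀ x ∈ S, ∀ y ∈ S, x ≠ y → T.dist x m + T.dist m y = T.dist x y

namespace StmtThreeAux

open SimpleGraph

set_option linter.unusedSectionVars false

variable {V : Type*} [DecidableEq V] {T : SimpleGraph V}

lemma dc (T : SimpleGraph V) (a b : V) : T.dist a b = T.dist b a :=
  SimpleGraph.dist_comm

/-- `m` lies (metrically) between `a` and `b`. -/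
def Btw (T : SimpleGraph V) (a m b : V) : Prop :=
  T.dist a m + T.dist m b = T.dist a b

lemma btw_comm {a m b : V} (h : Btw T a m b) : Btw T b m a := by
  unfold Btw at *
  rw [dc T b m, dc T m a, dc T b a]
  omega

lemma path_length_eq_dist (hT : T.IsTree) {a b : V} (p : T.Walk a b) (hp : p.IsPath) :
    p.length = T.dist a b := by
  obtain ⟨q, hq, hql⟩ := hT.isConnected.exists_path_of_dist a b
  rw [(hT.existsUnique_path a b).unique hp hq, hql]

lemma mem_support_of_btw (hT : T.IsTree) {a b m : V} (h : Btw T a m b)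
    (p : T.Walk a b) (hp : p.IsPath) : m ∈ p.support := by
  obtain ⟨q, hq, hql⟩ := hT.isConnected.exists_path_of_dist a m
  obtain ⟨s, hs, hsl⟩ := hT.isConnected.exists_path_of_dist m b
  have hw : (q.append s).length = T.dist a b := by
    rw [SimpleGraph.Walk.length_append, hql, hsl]; exact h
  have hwp : (q.append s).IsPath := (q.append s).isPath_of_length_eq_dist hw
  rw [(hT.existsUnique_path a b).unique hp hwp, SimpleGraph.Walk.mem_support_append_iff]
  exact Or.inl q.end_mem_support

lemma btw_of_mem_support (hT : T.IsTree) {a b m : V} (p : T.Walk a b) (hp : p.IsPath)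
    (h : m ∈ p.support) : Btw T a m b := by
  have h1 : T.dist a m ≤ (p.takeUntil m h).length := SimpleGraph.dist_le _
  have h2 : T.dist m b ≤ (p.dropUntil m h).length := SimpleGraph.dist_le _
  have h3 : (p.takeUntil m h).length + (p.dropUntil m h).length = p.length := by
    rw [← SimpleGraph.Walk.length_append, p.take_spec h]
  have h4 : p.length = T.dist a b := path_length_eq_dist hT p hp
  have h5 : T.dist a b ≤ T.dist a m + T.dist m b := hT.isConnected.dist_triangle
  unfold Btw
  omega

lemma btw_tri (hT : T.IsTree) {a b m : V} (c : V) (h : Btw T a m b) :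
    Btw T a m c ∨ Btw T c m b := by
  obtain ⟨p, hp, -⟩ := hT.isConnected.exists_path_of_dist a c
  obtain ⟨q, hq, -⟩ := hT.isConnected.exists_path_of_dist c b
  obtain ⟨w0, hw0, -⟩ := hT.isConnected.exists_path_of_dist a b
  have hm : m ∈ w0.support := mem_support_of_btw hT h w0 hw0
  have hb : (p.append q).bypass.IsPath := SimpleGraph.Walk.bypass_isPath _
  rw [(hT.existsUnique_path a b).unique hw0 hb] at hm
  have hm2 := SimpleGraph.Walk.support_bypass_subset _ hm
  rw [SimpleGraph.Walk.mem_support_append_iff] at hm2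
  rcases hm2 with h' | h'
  · exact Or.inl (btw_of_mem_support hT p hp h')
  · exact Or.inr (btw_of_mem_support hT q hq h')

lemma eq_of_dist_eq_zero (hT : T.IsTree) {a b : V} (h : T.dist a b = 0) : a = b :=
  (hT.isConnected.dist_eq_zero_iff).1 h

lemma btw_split (hT : T.IsTree) {r u m m' : V} (h1 : Btw T r m u) (h2 : Btw T r m' u)
    (hle : T.dist r m ≤ T.dist r m') : Btw T r m m' := by
  rcases btw_tri hT m' h1 with h | h
  · exact h
  · have hc : T.dist m' m = 0 := by unfold Btw at *; omega
    have : m' = m := eq_of_dist_eq_zero hT hc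
    subst this
    unfold Btw at *
    omega

lemma btw_eq (hT : T.IsTree) {r u m m' : V} (h1 : Btw T r m u) (h2 : Btw T r m' u)
    (heq : T.dist r m = T.dist r m') : m = m' := by
  have h3 := btw_split hT h1 h2 (le_of_eq heq)
  have hc : T.dist m m' = 0 := by unfold Btw at h3; omega
  exact eq_of_dist_eq_zero hT hc

lemma two_of_three (hT : T.IsTree) {m x y z : V} (r : V) (hxy : Btw T x m y)
    (hxz : Btw T x m z) (hyz : Btw T y m z) :
    (Btw T r m x ∧ Btw T r m y) ∨ (Btw T r m x ∧ Btw T r m z) ∨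
      (Btw T r m y ∧ Btw T r m z) := by
  have p1 : Btw T r m x ∨ Btw T r m y := by
    rcases btw_tri hT r hxy with h | h
    · exact Or.inl (btw_comm h)
    · exact Or.inr h
  have p2 : Btw T r m x ∨ Btw T r m z := by
    rcases btw_tri hT r hxz with h | h
    · exact Or.inl (btw_comm h)
    · exact Or.inr h
  have p3 : Btw T r m y ∨ Btw T r m z := by
    rcases btw_tri hT r hyz with h | h
    · exact Or.inl (btw_comm h)
    · exact Or.inr h
  tauto

/-- If `m`'s witness pair involves `u₀`, it can be re-witnessed using `m₁`'s other
witness `v₁`, where `m₁` is a meet farther from `r` on the branch toward `u₀`. -/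
lemma rewitness (hT : T.IsTree) {r m m₁ u₀ v₁ v : V}
    (hne : m ≠ m₁) (hle : T.dist r m ≤ T.dist r m₁)
    (h1 : Btw T r m₁ u₀) (h2 : Btw T r m₁ v₁) (h3 : Btw T u₀ m₁ v₁)
    (h4 : Btw T r m u₀) (h5 : Btw T r m v) (h6 : Btw T u₀ m v) :
    v₁ ≠ v ∧ Btw T r m v₁ ∧ Btw T v₁ m v := by
  have hdne : T.dist m m₁ ≠ 0 := fun hc => hne (eq_of_dist_eq_zero hT hc)
  have hlt : T.dist r m < T.dist r m₁ := by
    rcases lt_or_eq_of_le hle with h | h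
    · exact h
    · exact absurd (btw_eq hT h4 h1 h) hne
  have hvne : v₁ ≠ v := by
    rintro rfl
    have c1 : T.dist u₀ m = T.dist m u₀ := dc T _ _
    have c2 : T.dist u₀ m₁ = T.dist m₁ u₀ := dc T _ _
    unfold Btw at h1 h2 h3 h4 h5 h6
    omega
  have hmm₁ : Btw T r m m₁ := btw_split hT h4 h1 hle
  have t1 : T.dist m v₁ ≤ T.dist m m₁ + T.dist m₁ v₁ := hT.isConnected.dist_triangle
  have t2 : T.dist r v₁ ≤ T.dist r m + T.dist m v₁ := hT.isConnected.dist_triangle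
  have hbrv₁ : Btw T r m v₁ := by unfold Btw at *; omega
  have e_mv₁ : T.dist m m₁ + T.dist m₁ v₁ = T.dist m v₁ := by unfold Btw at *; omega
  refine ⟨hvne, hbrv₁, ?_⟩
  rcases btw_tri hT v₁ h6 with hA | hA
  · exfalso
    have c1 : T.dist u₀ m = T.dist m u₀ := dc T _ _
    have c2 : T.dist u₀ m₁ = T.dist m₁ u₀ := dc T _ _
    unfold Btw at h1 h3 h4 hmm₁ hA
    omega
  · exact hA

lemma key (hT : T.IsTree) [DecidableEq V] (r : V) :
    ∀ n (L M : Finset V), L.card ≤ n →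
      (∀ m ∈ M, ∃ u ∈ L, ∃ v ∈ L, u ≠ v ∧ Btw T r m u ∧ Btw T r m v ∧ Btw T u m v) →
      M.Nonempty → M.card + 1 ≤ L.card := by
  intro n
  induction n with
  | zero =>
    intro L M hL hW hM
    obtain ⟨m, hm⟩ := hM
    obtain ⟨u, huL, -⟩ := hW m hm
    have := Finset.card_pos.mpr ⟨u, huL⟩
    omega
  | succ n ih =>
    intro L M hL hW hM
    obtain ⟨m₁, hm₁M, hmax⟩ := M.exists_max_image (fun m => T.dist r m) hM
    obtain ⟨u₀, hu₀L, v₁, hv₁L, huv₁, hbru, hbrv₁, hbuv₁⟩ := hW m₁ hm₁M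
    set M' := M.erase m₁ with hM'def
    set L' := L.erase u₀ with hL'def
    have hW' : ∀ m ∈ M', ∃ u ∈ L', ∃ v ∈ L', u ≠ v ∧
        Btw T r m u ∧ Btw T r m v ∧ Btw T u m v := by
      intro m hm
      have hmM : m ∈ M := Finset.mem_of_mem_erase hm
      have hmne : m ≠ m₁ := Finset.ne_of_mem_erase hm
      obtain ⟨u, huL, v, hvL, huv, b1, b2, b3⟩ := hW m hmM
      by_cases hu : u = u₀
      · subst hu
        obtain ⟨hne', brv₁, bvv⟩ :=
          rewitness hT hmne (hmax m hmM) hbru hbrv₁ hbuv₁ b1 b2 b3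
        exact ⟨v₁, Finset.mem_erase.mpr ⟨Ne.symm huv₁, hv₁L⟩,
          v, Finset.mem_erase.mpr ⟨Ne.symm huv, hvL⟩, hne', brv₁, b2, bvv⟩
      · by_cases hv : v = u₀
        · subst hv
          obtain ⟨hne', brv₁, bvv⟩ :=
            rewitness hT hmne (hmax m hmM) hbru hbrv₁ hbuv₁ b2 b1 (btw_comm b3)
          exact ⟨v₁, Finset.mem_erase.mpr ⟨Ne.symm huv₁, hv₁L⟩,
            u, Finset.mem_erase.mpr ⟨hu, huL⟩, hne', brv₁, b1, bvv⟩
        · exact ⟨u, Finset.mem_erase.mpr ⟨hu, huL⟩, v, Finset.mem_erase.mpr ⟨hv, hvL⟩,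
            huv, b1, b2, b3⟩
    have hcardL : L'.card = L.card - 1 := Finset.card_erase_of_mem hu₀L
    have hcardM : M'.card = M.card - 1 := Finset.card_erase_of_mem hm₁M
    have hLpos : 1 ≤ L.card := Finset.card_pos.mpr ⟨u₀, hu₀L⟩
    have hMpos : 1 ≤ M.card := Finset.card_pos.mpr ⟨m₁, hm₁M⟩
    rcases M'.eq_empty_or_nonempty with he | hne
    · have hM1 : M.card = 1 := by
        have := Finset.card_eq_zero.mpr he
        omega
      have h2 : 1 < L.card := Finset.one_lt_card.mpr ⟨u₀, hu₀L, v₁, hv₁L, huv₁⟩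
      omega
    · have := ih L' M' (by omega) hW' hne
      omega

end StmtThreeAux

theorem stmt_3 {V : Type*} [Fintype V] [DecidableEq V]
    (T : SimpleGraph V) [DecidableRel T.Adj] (hT : T.IsTree)
    (X : Finset V) (hleaf : ∀ v : V, T.degree v = 1 ↔ v ∈ X)
    (hdeg3 : ∀ v : V, v ∉ X → T.degree v = 3)
    (C : Finset (Finset V)) (hcard : ∀ S ∈ C, S.card = 3) (hunion : C.sup id = X)
    (f : Finset V → V)
    (hf : ∀ S ∈ C, isMedianOf T S (f S) ∧ f S ∉ X)
    (hinj : ∀ S₁ ∈ C, ∀ S₂ ∈ C, f S₁ = f S₂ → S₁ = S₂) :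
    ∀ C' ⊆ C, C'.Nonempty → (C'.sup id).card ≥ C'.card + 2 := by
  classical
  intro C' hC'sub hC'ne
  obtain ⟨S₀, hS₀⟩ := hC'ne
  have h3 : S₀.card = 3 := hcard S₀ (hC'sub hS₀)
  have hS₀ne : S₀.Nonempty := by rw [← Finset.card_pos, h3]; norm_num
  obtain ⟨r, hrS₀⟩ := hS₀ne
  have hrsup : r ∈ C'.sup id := Finset.mem_sup.mpr ⟨S₀, hS₀, hrS₀⟩
  have hsupX : C'.sup id ⊆ X := by
    intro a ha
    obtain ⟨S, hS, haS⟩ := Finset.mem_sup.mp ha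
    rw [← hunion]
    exact Finset.mem_sup.mpr ⟨S, hC'sub hS, haS⟩
  have hrX : r ∈ X := hsupX hrsup
  set L : Finset V := (C'.sup id).erase r with hLdef
  set M : Finset V := C'.image f with hMdef
  have hWit : ∀ m ∈ M, ∃ u ∈ L, ∃ v ∈ L, u ≠ v ∧
      StmtThreeAux.Btw T r m u ∧ StmtThreeAux.Btw T r m v ∧ StmtThreeAux.Btw T u m v := by
    intro m hm
    obtain ⟨S, hSC', rfl⟩ := Finset.mem_image.mp hm
    have hSC : S ∈ C := hC'sub hSC'
    have hmed := (hf S hSC).1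
    have hfX := (hf S hSC).2
    obtain ⟨x, y, z, hxy, hxz, hyz, hSxyz⟩ := Finset.card_eq_three.mp (hcard S hSC)
    have hxS : x ∈ S := by rw [hSxyz]; simp
    have hyS : y ∈ S := by rw [hSxyz]; simp
    have hzS : z ∈ S := by rw [hSxyz]; simp
    have bxy : StmtThreeAux.Btw T x (f S) y := hmed x hxS y hyS hxy
    have bxz : StmtThreeAux.Btw T x (f S) z := hmed x hxS z hzS hxz
    have byz : StmtThreeAux.Btw T y (f S) z := hmed y hyS z hzS hyz
    have hmem : ∀ u ∈ S, StmtThreeAux.Btw T r (f S) u → u ∈ L := by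
      intro u huS hb
      refine Finset.mem_erase.mpr ⟨?_, ?_⟩
      · intro hur
        rw [hur] at hb
        have hrr : T.dist r r = 0 := SimpleGraph.dist_self
        have h0 : T.dist r (f S) = 0 := by
          unfold StmtThreeAux.Btw at hb
          omega
        have : r = f S := StmtThreeAux.eq_of_dist_eq_zero hT h0
        exact hfX (this ▸ hrX)
      · exact Finset.mem_sup.mpr ⟨S, hSC', huS⟩
    rcases StmtThreeAux.two_of_three hT r bxy bxz byz with ⟨h1, h2⟩ | ⟨h1, h2⟩ | ⟨h1, h2⟩
    · exact ⟨x, hmem x hxS h1, y, hmem y hyS h2, hxy, h1, h2, bxy⟩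
    · exact ⟨x, hmem x hxS h1, z, hmem z hzS h2, hxz, h1, h2, bxz⟩
    · exact ⟨y, hmem y hyS h1, z, hmem z hzS h2, hyz, h1, h2, byz⟩
  have hMne : M.Nonempty := ⟨f S₀, Finset.mem_image_of_mem f hS₀⟩
  have hkey := StmtThreeAux.key hT r L.card L M le_rfl hWit hMne
  have hMcard : M.card = C'.card :=
    Finset.card_image_of_injOn fun S₁ h₁ S₂ h₂ h => hinj S₁ (hC'sub h₁) S₂ (hC'sub h₂) h
  have hLcard : L.card = (C'.sup id).card - 1 := Finset.card_erase_of_mem hrsup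
  have hsuppos : 1 ≤ (C'.sup id).card := Finset.card_pos.mpr ⟨r, hrsup⟩
  omega
end

section
/- Let X be finite and 𝒞 ⊆ binom(X,3) with ∪𝒞 = X satisfy |∪𝒞'| ≥ |𝒞'| + 2 for all nonempty 𝒞' ⊆ 𝒞. Let x ∈ X lie in exactly the two triples {a,b,x}, {a,b',x} ∈ 𝒞 with b ≠ b'. Then 𝒞₁ := (𝒞 − {{a,b,x},{a,b',x}}) ∪ {{a,b,b'}} satisfies ∪𝒞₁ = X − {x} and |∪𝒟| ≥ |𝒟| + 2 for all nonempty 𝒟 ⊆ 𝒞₁. -/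
theorem trip1 {α : Type*} [DecidableEq α] (a b x : α) (h : ({a,b,x} : Finset α).card = 3) :
    a ≠ b := by
  rintro rfl
  rw [show ({a,a,x}:Finset α)={a,x} by simp] at h
  have := Finset.card_insert_le a ({x}:Finset α); simp at this; omega

theorem trip2 {α : Type*} [DecidableEq α] (a b x : α) (h : ({a,b,x} : Finset α).card = 3) :
    a ≠ x := by
  rintro rfl
  rw [show ({a,b,a}:Finset α)={a,b} by ext y; simp; tauto] at h
  have := Finset.card_insert_le a ({b}:Finset α); simp at this; omega

theorem trip3 {α : Type*} [DecidableEq α] (a b x : α) (h : ({a,b,x} : Finset α).card = 3) :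
    b ≠ x := by
  rintro rfl
  rw [show ({a,b,b}:Finset α)={a,b} by simp] at h
  have := Finset.card_insert_le a ({b}:Finset α); simp at this; omega

theorem stmt_7 {α : Type*} [DecidableEq α] (X : Finset α) (C : Finset (Finset α))
    (hcard : ∀ S ∈ C, S.card = 3) (hunion : C.sup id = X)
    (hall : ∀ C' ⊆ C, C'.Nonempty → (C'.sup id).card ≥ C'.card + 2)
    (x a b b' : α) (hx : x ∈ X) (hbb' : b ≠ b')
    (hm1 : ({a, b, x} : Finset α) ∈ C) (hm2 : ({a, b', x} : Finset α) ∈ C)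
    (huniq : ∀ S ∈ C, x ∈ S → S = {a, b, x} ∨ S = {a, b', x}) :
    (((C.erase {a, b, x}).erase {a, b', x} ∪ {({a, b, b'} : Finset α)}).sup id = X.erase x) ∧
    ∀ D ⊆ (C.erase {a, b, x}).erase {a, b', x} ∪ {({a, b, b'} : Finset α)},
      D.Nonempty → (D.sup id).card ≥ D.card + 2 := by
  have h31 := hcard _ hm1
  have h32 := hcard _ hm2
  have hax : a ≠ x := trip2 a b x h31
  have hbx : b ≠ x := trip3 a b x h31
  have hb'x : b' ≠ x := trip3 a b' x h32
  have hmemX : ∀ S ∈ C, ∀ y ∈ S, y ∈ X := by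
    intro S hS y hy
    rw [← hunion]
    exact Finset.mem_sup.mpr ⟨S, hS, hy⟩
  have haX : a ∈ X := hmemX _ hm1 a (by simp)
  have hbX : b ∈ X := hmemX _ hm1 b (by simp)
  have hb'X : b' ∈ X := hmemX _ hm2 b' (by simp)
  have hxT0 : x ∉ ({a,b,b'} : Finset α) := by
    simp only [Finset.mem_insert, Finset.mem_singleton]
    push_neg
    exact ⟨fun h => hax h.symm, fun h => hbx h.symm, fun h => hb'x h.symm⟩
  have hT0T1 : ({a,b,b'} : Finset α) ≠ {a,b,x} := by
    intro h; exact hxT0 (h ▸ (by simp : x ∈ ({a,b,x}:Finset α)))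
  have hT0T2 : ({a,b,b'} : Finset α) ≠ {a,b',x} := by
    intro h; exact hxT0 (h ▸ (by simp : x ∈ ({a,b',x}:Finset α)))
  have hT1T2 : ({a,b,x} : Finset α) ≠ {a,b',x} := by
    intro h
    have : b ∈ ({a,b',x} : Finset α) := h ▸ (by simp : b ∈ ({a,b,x}:Finset α))
    simp only [Finset.mem_insert, Finset.mem_singleton] at this
    rcases this with h1|h1|h1
    · exact trip1 a b x h31 h1.symm
    · exact hbb' h1
    · exact hbx h1
  -- members of the erased part don't contain x
  have hxnot : ∀ S ∈ (C.erase {a, b, x}).erase {a, b', x}, x ∉ S := by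
    intro S hS hxS
    simp only [Finset.mem_erase] at hS
    rcases huniq S hS.2.2 hxS with h|h
    · exact hS.2.1 h
    · exact hS.1 h
  have hxnotC1 : x ∉ ((C.erase {a, b, x}).erase {a, b', x} ∪
      {({a, b, b'} : Finset α)}).sup id := by
    intro h
    rcases Finset.mem_sup.mp h with ⟨S, hS, hxS⟩
    rcases Finset.mem_union.mp hS with h1|h1
    · exact hxnot S h1 hxS
    · simp only [Finset.mem_singleton] at h1; subst h1; exact hxT0 hxS
  constructor
  · ext y
    simp only [Finset.mem_erase]
    constructor
    · intro hy
      rcases Finset.mem_sup.mp hy with ⟨S, hS, hyS⟩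
      rcases Finset.mem_union.mp hS with h1|h1
      · refine ⟨fun h => hxnot S h1 (h ▸ hyS), hmemX S ?_ y hyS⟩
        exact Finset.mem_of_mem_erase (Finset.mem_of_mem_erase h1)
      · simp only [Finset.mem_singleton] at h1; subst h1
        refine ⟨fun h => hxT0 (h ▸ hyS), ?_⟩
        simp only [id_eq, Finset.mem_insert, Finset.mem_singleton] at hyS
        rcases hyS with rfl|rfl|rfl <;> assumption
    · rintro ⟨hyx, hyX⟩
      rw [← hunion] at hyX
      rcases Finset.mem_sup.mp hyX with ⟨S, hS, hyS⟩
      apply Finset.mem_sup.mpr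
      by_cases h1 : S = {a,b,x}
      · subst h1
        refine ⟨{a,b,b'}, Finset.mem_union_right _ (Finset.mem_singleton_self _), ?_⟩
        simp only [id_eq, Finset.mem_insert, Finset.mem_singleton] at hyS ⊢
        tauto
      by_cases h2 : S = {a,b',x}
      · subst h2
        refine ⟨{a,b,b'}, Finset.mem_union_right _ (Finset.mem_singleton_self _), ?_⟩
        simp only [id_eq, Finset.mem_insert, Finset.mem_singleton] at hyS ⊢
        tauto
      · exact ⟨S, Finset.mem_union_left _ (Finset.mem_erase.mpr ⟨h2,
          Finset.mem_erase.mpr ⟨h1, hS⟩⟩), hyS⟩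
  · intro D hD hDne
    by_cases hT0 : ({a,b,b'} : Finset α) ∈ D
    · set D' := (D.erase {a,b,b'}) ∪ {({a,b,x} : Finset α), {a,b',x}} with hD'def
      have hDsub : D.erase {a,b,b'} ⊆ C := by
        intro S hS
        simp only [Finset.mem_erase] at hS
        rcases Finset.mem_union.mp (hD hS.2) with h1|h1
        · exact Finset.mem_of_mem_erase (Finset.mem_of_mem_erase h1)
        · simp only [Finset.mem_singleton] at h1; exact absurd h1 hS.1
      have hD'C : D' ⊆ C := by
        intro S hS
        rcases Finset.mem_union.mp hS with h1|h1
        · exact hDsub h1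
        · simp only [Finset.mem_insert, Finset.mem_singleton] at h1
          rcases h1 with rfl|rfl <;> assumption
      have hT1D : ({a,b,x} : Finset α) ∉ D := by
        intro h
        rcases Finset.mem_union.mp (hD h) with h1|h1
        · exact (Finset.mem_erase.mp (Finset.mem_of_mem_erase h1)).1 rfl
        · simp only [Finset.mem_singleton] at h1; exact hT0T1 h1.symm
      have hT2D : ({a,b',x} : Finset α) ∉ D := by
        intro h
        rcases Finset.mem_union.mp (hD h) with h1|h1
        · exact (Finset.mem_erase.mp h1).1 rfl
        · simp only [Finset.mem_singleton] at h1; exact hT0T2 h1.symm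
      have hcardD' : D'.card = D.card + 1 := by
        rw [hD'def, Finset.card_union_of_disjoint, Finset.card_erase_of_mem hT0]
        · have h2 : ({({a,b,x} : Finset α), {a,b',x}} : Finset (Finset α)).card = 2 := by
            rw [Finset.card_insert_of_notMem (by simpa using hT1T2), Finset.card_singleton]
          rw [h2]
          have : 1 ≤ D.card := Finset.card_pos.mpr ⟨_, hT0⟩
          omega
        · rw [Finset.disjoint_right]
          intro S hS
          simp only [Finset.mem_insert, Finset.mem_singleton] at hS
          simp only [Finset.mem_erase]
          rcases hS with rfl|rfl
          · exact fun h => hT1D h.2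
          · exact fun h => hT2D h.2
      have hxD : x ∉ D.sup id := by
        intro h
        rcases Finset.mem_sup.mp h with ⟨S, hS, hxS⟩
        rcases Finset.mem_union.mp (hD hS) with h1|h1
        · exact hxnot S h1 hxS
        · simp only [Finset.mem_singleton] at h1; subst h1; exact hxT0 hxS
      have hsup : D'.sup id = insert x (D.sup id) := by
        ext y
        simp only [Finset.mem_insert, Finset.mem_sup, hD'def, Finset.mem_union,
          Finset.mem_erase, Finset.mem_singleton]
        constructor
        · rintro ⟨S, hS, hyS⟩
          rcases hS with ⟨hne, hSD⟩|hS
          · exact Or.inr ⟨S, hSD, hyS⟩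
          · rcases hS with rfl|rfl <;>
            · simp only [id_eq, Finset.mem_insert, Finset.mem_singleton] at hyS
              rcases hyS with h|h|h
              · exact Or.inr ⟨{a,b,b'}, hT0, by simp [h]⟩
              · exact Or.inr ⟨{a,b,b'}, hT0, by simp [h]⟩
              · exact Or.inl h
        · rintro (hyx|⟨S, hSD, hyS⟩)
          · refine ⟨{a,b,x}, Or.inr (Or.inl rfl), ?_⟩
            rw [hyx]; simp
          · by_cases hS0 : S = {a,b,b'}
            · subst hS0
              simp only [id_eq, Finset.mem_insert, Finset.mem_singleton] at hyS
              rcases hyS with h|h|h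
              · exact ⟨{a,b,x}, Or.inr (Or.inl rfl), by simp [h]⟩
              · exact ⟨{a,b,x}, Or.inr (Or.inl rfl), by simp [h]⟩
              · exact ⟨{a,b',x}, Or.inr (Or.inr rfl), by simp [h]⟩
            · exact ⟨S, Or.inl ⟨hS0, hSD⟩, hyS⟩
      have hkey := hall D' hD'C ⟨{a,b,x}, Finset.mem_union_right _ (Finset.mem_insert_self _ _)⟩
      rw [hsup, Finset.card_insert_of_notMem hxD, hcardD'] at hkey
      omega
    · have hDC : D ⊆ C := by
        intro S hS
        rcases Finset.mem_union.mp (hD hS) with h1|h1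
        · exact Finset.mem_of_mem_erase (Finset.mem_of_mem_erase h1)
        · simp only [Finset.mem_singleton] at h1; subst h1; exact absurd hS hT0
      exact hall D hDC hDne
end

section
/- Let X be finite and 𝒞 ⊆ binom(X,3) with ∪𝒞 = X satisfy |∪𝒞'| ≥ |𝒞'| + 2 for all nonempty 𝒞' ⊆ 𝒞. Let x ∈ X lie in exactly the two triples {a,b,x}, {a',b',x} ∈ 𝒞 with {a,b} ∩ {a',b'} = ∅. Set 𝒞' := 𝒞 − {{a,b,x},{a',b',x}}, 𝒞₁ := 𝒞' ∪ {{a,a',b}}, 𝒞₂ := 𝒞' ∪ {{a,a',b'}}. Then at least one of 𝒞₁, 𝒞₂ satisfies the condition |∪𝒟| ≥ |𝒟| + 2 for all nonempty subcollections 𝒟 of it. -/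
theorem stmt_8 {α : Type*} [DecidableEq α] (X : Finset α) (C : Finset (Finset α))
    (hcard : ∀ S ∈ C, S.card = 3) (hunion : C.sup id = X)
    (hall : ∀ C' ⊆ C, C'.Nonempty → (C'.sup id).card ≥ C'.card + 2)
    (x a b a' b' : α) (hx : x ∈ X)
    (hdisj : ({a, b} : Finset α) ∩ ({a', b'} : Finset α) = ∅)
    (hm1 : ({a, b, x} : Finset α) ∈ C) (hm2 : ({a', b', x} : Finset α) ∈ C)
    (huniq : ∀ S ∈ C, x ∈ S → S = {a, b, x} ∨ S = {a', b', x}) :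
    (∀ D ⊆ (C.erase {a, b, x}).erase {a', b', x} ∪ {({a, a', b} : Finset α)},
      D.Nonempty → (D.sup id).card ≥ D.card + 2) ∨
    (∀ D ⊆ (C.erase {a, b, x}).erase {a', b', x} ∪ {({a, a', b'} : Finset α)},
      D.Nonempty → (D.sup id).card ≥ D.card + 2) := by
  classical
  -- basic distinctness facts
  have key2 : ∀ (u v : α) (s : Finset α), s ⊆ {u, v} → s.card ≤ 2 := by
    intro u v s hs
    calc s.card ≤ ({u, v} : Finset α).card := Finset.card_le_card hs
      _ ≤ 2 := by
        have := Finset.card_insert_le u ({v} : Finset α)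
        simpa using this
  have h31 := hcard _ hm1
  have h32 := hcard _ hm2
  have hax : a ≠ x := by
    rintro rfl
    have hs : ({a, b, a} : Finset α) ⊆ {a, b} := by
      intro y hy; simp at hy ⊢; tauto
    have := key2 _ _ _ hs; omega
  have hbx : b ≠ x := by
    rintro rfl
    have hs : ({a, b, b} : Finset α) ⊆ {a, b} := by
      intro y hy; simp at hy ⊢; tauto
    have := key2 _ _ _ hs; omega
  have hab : a ≠ b := by
    rintro rfl
    have hs : ({a, a, x} : Finset α) ⊆ {a, x} := by
      intro y hy; simp at hy ⊢; tauto
    have := key2 _ _ _ hs; omega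
  have ha'x : a' ≠ x := by
    rintro rfl
    have hs : ({a', b', a'} : Finset α) ⊆ {a', b'} := by
      intro y hy; simp at hy ⊢; tauto
    have := key2 _ _ _ hs; omega
  have hb'x : b' ≠ x := by
    rintro rfl
    have hs : ({a', b', b'} : Finset α) ⊆ {a', b'} := by
      intro y hy; simp at hy ⊢; tauto
    have := key2 _ _ _ hs; omega
  have ha'b' : a' ≠ b' := by
    rintro rfl
    have hs : ({a', a', x} : Finset α) ⊆ {a', x} := by
      intro y hy; simp at hy ⊢; tauto
    have := key2 _ _ _ hs; omega
  have hdm : ∀ y : α, y ∈ ({a, b} : Finset α) → y ∈ ({a', b'} : Finset α) → False := by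
    intro y h1 h2
    have : y ∈ ({a, b} : Finset α) ∩ {a', b'} := Finset.mem_inter.mpr ⟨h1, h2⟩
    rw [hdisj] at this
    exact absurd this (Finset.notMem_empty y)
  have haa' : a ≠ a' := fun h => hdm a (by simp) (by simp [h])
  have hab' : a ≠ b' := fun h => hdm a (by simp) (by simp [h])
  have hba' : b ≠ a' := fun h => hdm b (by simp) (by simp [h])
  have hbb' : b ≠ b' := fun h => hdm b (by simp) (by simp [h])
  by_contra hcon
  push_neg at hcon
  obtain ⟨⟨D, hD, hDne, hDc⟩, D', hD', hD'ne, hD'c⟩ := hcon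
  set M₁ := ({a, b, x} : Finset α) with hM₁def
  set M₂ := ({a', b', x} : Finset α) with hM₂def
  set T₁ := ({a, a', b} : Finset α) with hT₁def
  set T₂ := ({a, a', b'} : Finset α) with hT₂def
  set Ce := (C.erase M₁).erase M₂ with hCedef
  have hxT₁ : x ∉ T₁ := by
    simp only [hT₁def, Finset.mem_insert, Finset.mem_singleton]
    push_neg
    exact ⟨Ne.symm hax, Ne.symm ha'x, Ne.symm hbx⟩
  have hxT₂ : x ∉ T₂ := by
    simp only [hT₂def, Finset.mem_insert, Finset.mem_singleton]
    push_neg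
    exact ⟨Ne.symm hax, Ne.symm ha'x, Ne.symm hb'x⟩
  have hT₁T₂ : T₁ ≠ T₂ := by
    intro h
    have hb1 : b ∈ T₁ := by simp [hT₁def]
    rw [h] at hb1
    simp only [hT₂def, Finset.mem_insert, Finset.mem_singleton] at hb1
    tauto
  have hM₁M₂ : M₁ ≠ M₂ := by
    intro h
    have hb1 : a ∈ M₁ := by simp [hM₁def]
    rw [h] at hb1
    simp only [hM₂def, Finset.mem_insert, Finset.mem_singleton] at hb1
    tauto
  have hCeC : Ce ⊆ C := (Finset.erase_subset _ _).trans (Finset.erase_subset _ _)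
  have hxCe : ∀ S ∈ Ce, x ∉ S := by
    intro S hS hxS
    have hne2 : S ≠ M₂ := Finset.ne_of_mem_erase hS
    have hne1 : S ≠ M₁ := Finset.ne_of_mem_erase (Finset.mem_of_mem_erase hS)
    rcases huniq S (hCeC hS) hxS with h | h
    · exact hne1 h
    · exact hne2 h
  have hDmem : ∀ S ∈ D, S ∈ Ce ∨ S = T₁ := by
    intro S hS
    have := hD hS
    exact Or.symm (by simpa [Finset.mem_union, Finset.mem_singleton] using this)
  have hD'mem : ∀ S ∈ D', S ∈ Ce ∨ S = T₂ := by
    intro S hS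
    have := hD' hS
    exact Or.symm (by simpa [Finset.mem_union, Finset.mem_singleton] using this)
  have hT₁D : T₁ ∈ D := by
    by_contra h
    have hsub : D ⊆ C := by
      intro S hS
      rcases hDmem S hS with h1 | rfl
      · exact hCeC h1
      · exact absurd hS h
    have := hall D hsub hDne; omega
  have hT₂D' : T₂ ∈ D' := by
    by_contra h
    have hsub : D' ⊆ C := by
      intro S hS
      rcases hD'mem S hS with h1 | rfl
      · exact hCeC h1
      · exact absurd hS h
    have := hall D' hsub hD'ne; omega
  set A := D.erase T₁ ∪ D'.erase T₂ with hAdef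
  have hACe : A ⊆ Ce := by
    intro S hS
    rcases Finset.mem_union.mp hS with h | h
    · rcases hDmem S (Finset.mem_of_mem_erase h) with h1 | rfl
      · exact h1
      · exact absurd rfl (Finset.ne_of_mem_erase h)
    · rcases hD'mem S (Finset.mem_of_mem_erase h) with h1 | rfl
      · exact h1
      · exact absurd rfl (Finset.ne_of_mem_erase h)
  have hM₁A : M₁ ∉ A := fun h => hxCe M₁ (hACe h) (by simp [hM₁def])
  have hM₂A : M₂ ∉ A := fun h => hxCe M₂ (hACe h) (by simp [hM₂def])
  set E := insert M₁ (insert M₂ A) with hEdef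
  have hEcard : E.card = A.card + 2 := by
    rw [hEdef, Finset.card_insert_of_notMem (by simp [hM₁M₂, hM₁A]),
      Finset.card_insert_of_notMem hM₂A]
  have hEC : E ⊆ C := by
    intro S hS
    rcases Finset.mem_insert.mp hS with rfl | hS
    · exact hm1
    rcases Finset.mem_insert.mp hS with rfl | hS
    · exact hm2
    · exact hCeC (hACe hS)
  have hEne : E.Nonempty := ⟨M₁, Finset.mem_insert_self _ _⟩
  have hDD'A : (D ∪ D').card ≤ A.card + 2 := by
    have hsub : D ∪ D' ⊆ insert T₁ (insert T₂ A) := by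
      intro S hS
      simp only [Finset.mem_insert, hAdef, Finset.mem_union, Finset.mem_erase]
      by_cases h1 : S = T₁
      · tauto
      by_cases h2 : S = T₂
      · tauto
      rcases Finset.mem_union.mp hS with h | h
      · exact Or.inr (Or.inr (Or.inl ⟨h1, h⟩))
      · exact Or.inr (Or.inr (Or.inr ⟨h2, h⟩))
    calc (D ∪ D').card ≤ (insert T₁ (insert T₂ A)).card := Finset.card_le_card hsub
      _ ≤ A.card + 2 := by
        have h1 := Finset.card_insert_le T₁ (insert T₂ A)
        have h2 := Finset.card_insert_le T₂ A
        omega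
  have hxD : x ∉ D.sup id := by
    intro h
    obtain ⟨S, hS, hxS⟩ := Finset.mem_sup.mp h
    rcases hDmem S hS with h1 | rfl
    · exact hxCe S h1 hxS
    · exact hxT₁ hxS
  have hxD' : x ∉ D'.sup id := by
    intro h
    obtain ⟨S, hS, hxS⟩ := Finset.mem_sup.mp h
    rcases hD'mem S hS with h1 | rfl
    · exact hxCe S h1 hxS
    · exact hxT₂ hxS
  have haD : a ∈ D.sup id := Finset.mem_sup.mpr ⟨T₁, hT₁D, by simp [hT₁def]⟩
  have ha'D : a' ∈ D.sup id := Finset.mem_sup.mpr ⟨T₁, hT₁D, by simp [hT₁def]⟩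
  have hbD : b ∈ D.sup id := Finset.mem_sup.mpr ⟨T₁, hT₁D, by simp [hT₁def]⟩
  have haD' : a ∈ D'.sup id := Finset.mem_sup.mpr ⟨T₂, hT₂D', by simp [hT₂def]⟩
  have ha'D' : a' ∈ D'.sup id := Finset.mem_sup.mpr ⟨T₂, hT₂D', by simp [hT₂def]⟩
  have hb'D' : b' ∈ D'.sup id := Finset.mem_sup.mpr ⟨T₂, hT₂D', by simp [hT₂def]⟩
  have hEsup : E.sup id ⊆ insert x (D.sup id ∪ D'.sup id) := by
    intro y hy
    obtain ⟨S, hS, hyS⟩ := Finset.mem_sup.mp hy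
    simp only [Finset.mem_insert, Finset.mem_union]
    rcases Finset.mem_insert.mp hS with rfl | hS
    · simp only [hM₁def, id_eq, Finset.mem_insert, Finset.mem_singleton] at hyS
      rcases hyS with rfl | rfl | rfl
      · exact Or.inr (Or.inl haD)
      · exact Or.inr (Or.inl hbD)
      · exact Or.inl rfl
    rcases Finset.mem_insert.mp hS with rfl | hS
    · simp only [hM₂def, id_eq, Finset.mem_insert, Finset.mem_singleton] at hyS
      rcases hyS with rfl | rfl | rfl
      · exact Or.inr (Or.inr ha'D')
      · exact Or.inr (Or.inr hb'D')
      · exact Or.inl rfl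
    rcases Finset.mem_union.mp hS with h | h
    · exact Or.inr (Or.inl (Finset.mem_sup.mpr ⟨S, Finset.mem_of_mem_erase h, hyS⟩))
    · exact Or.inr (Or.inr (Finset.mem_sup.mpr ⟨S, Finset.mem_of_mem_erase h, hyS⟩))
  have hsupE_le : (E.sup id).card ≤ (D.sup id ∪ D'.sup id).card + 1 := by
    calc (E.sup id).card ≤ (insert x (D.sup id ∪ D'.sup id)).card :=
          Finset.card_le_card hEsup
      _ ≤ (D.sup id ∪ D'.sup id).card + 1 := Finset.card_insert_le _ _
  have hinter : (D ∩ D').card + 2 ≤ (D.sup id ∩ D'.sup id).card := by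
    rcases (D ∩ D').eq_empty_or_nonempty with he | hne
    · rw [he]
      have hsub : ({a, a'} : Finset α) ⊆ D.sup id ∩ D'.sup id := by
        intro y hy
        simp only [Finset.mem_insert, Finset.mem_singleton] at hy
        rcases hy with rfl | rfl
        · exact Finset.mem_inter.mpr ⟨haD, haD'⟩
        · exact Finset.mem_inter.mpr ⟨ha'D, ha'D'⟩
      have hc2 : ({a, a'} : Finset α).card = 2 := by
        rw [Finset.card_insert_of_notMem (by simp [haa'])]
        simp
      have := Finset.card_le_card hsub
      simp only [Finset.card_empty]
      omega
    · have hsubC : D ∩ D' ⊆ C := by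
        intro S hS
        have h1 := hDmem S (Finset.mem_inter.mp hS).1
        have h2 := hD'mem S (Finset.mem_inter.mp hS).2
        rcases h1 with h1 | rfl
        · exact hCeC h1
        rcases h2 with h2 | h2
        · exact hCeC h2
        · exact absurd h2 hT₁T₂
      have hh := hall _ hsubC hne
      have hsub2 : (D ∩ D').sup id ⊆ D.sup id ∩ D'.sup id :=
        Finset.subset_inter (Finset.sup_mono Finset.inter_subset_left)
          (Finset.sup_mono Finset.inter_subset_right)
      have := Finset.card_le_card hsub2
      omega
  have hEineq := hall E hEC hEne
  have e3 := Finset.card_union_add_card_inter D D'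
  have e6 := Finset.card_union_add_card_inter (D.sup id) (D'.sup id)
  omega
end

section
/- Let X be a finite set and 𝒞 a collection of subsets of X, each of size at least 3, with ∪𝒞 = X, satisfying: for every nonempty 𝒞' ⊆ 𝒞, |∪𝒞'| − 2 ≥ Σ_{Y ∈ 𝒞'}(|Y| − 2). For each Y ∈ 𝒞 with Y = {y₁,…,y_m}, let 𝒞_Y := {{y₁,y₂,y₃}, {y₁,y₂,y₄}, …, {y₁,y₂,y_m}}. Then 𝒞_* := ∪_{Y ∈ 𝒞} 𝒞_Y is a collection of 3-element subsets of X satisfying |∪𝒟| ≥ |𝒟| + 2 for every nonempty 𝒟 ⊆ 𝒞_*. -/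
theorem stmt_13 {α : Type*} [DecidableEq α] (X : Finset α) (C : Finset (Finset α))
    (hcard : ∀ Y ∈ C, 3 ≤ Y.card) (hunion : C.sup id = X)
    (hcond : ∀ C' ⊆ C, C'.Nonempty →
      (∑ Y ∈ C', (Y.card - 2)) + 2 ≤ (C'.sup id).card)
    (p : Finset α → α × α)
    (hp : ∀ Y ∈ C, (p Y).1 ∈ Y ∧ (p Y).2 ∈ Y ∧ (p Y).1 ≠ (p Y).2) :
    (∀ S ∈ C.biUnion (fun Y => (Y \ {(p Y).1, (p Y).2}).image
        (fun y => ({(p Y).1, (p Y).2, y} : Finset α))), S.card = 3 ∧ S ⊆ X) ∧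
    ∀ D ⊆ C.biUnion (fun Y => (Y \ {(p Y).1, (p Y).2}).image
        (fun y => ({(p Y).1, (p Y).2, y} : Finset α))),
      D.Nonempty → (D.sup id).card ≥ D.card + 2 := by
  classical
  constructor
  · intro S hS
    simp only [Finset.mem_biUnion, Finset.mem_image, Finset.mem_sdiff, Finset.mem_insert,
      Finset.mem_singleton] at hS
    obtain ⟨Y, hY, y, ⟨hyY, hy⟩, rfl⟩ := hS
    push_neg at hy
    obtain ⟨ha, hb, hab⟩ := hp Y hY
    have hYX : Y ⊆ X := hunion ▸ Finset.le_sup (f := id) hY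
    constructor
    · rw [Finset.card_insert_of_notMem, Finset.card_insert_of_notMem, Finset.card_singleton]
      · simp [Ne.symm hy.2]
      · simp only [Finset.mem_insert, Finset.mem_singleton]
        push_neg
        exact ⟨hab, Ne.symm hy.1⟩
    · intro x hx
      simp only [Finset.mem_insert, Finset.mem_singleton] at hx
      rcases hx with rfl | rfl | rfl
      · exact hYX ha
      · exact hYX hb
      · exact hYX hyY
  · intro D hD hDne
    set CY : Finset α → Finset (Finset α) :=
      fun Y => (Y \ {(p Y).1, (p Y).2}).image
        (fun y => ({(p Y).1, (p Y).2, y} : Finset α)) with hCY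
    set C' : Finset (Finset α) := C.filter (fun Y => (CY Y ∩ D).Nonempty) with hC'
    set W : Finset α → Finset α :=
      fun Y => (Y \ {(p Y).1, (p Y).2}).filter
        (fun y => ({(p Y).1, (p Y).2, y} : Finset α) ∈ D) with hWdef
    have hC'sub : C' ⊆ C := Finset.filter_subset _ _
    -- every S ∈ D comes from some Y ∈ C'
    have hcover : ∀ S ∈ D, ∃ Y ∈ C', S ∈ CY Y := by
      intro S hS
      obtain ⟨Y, hY, hSY⟩ := Finset.mem_biUnion.mp (hD hS)
      exact ⟨Y, Finset.mem_filter.mpr ⟨hY, ⟨S, Finset.mem_inter.mpr ⟨hSY, hS⟩⟩⟩, hSY⟩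
    have hC'ne : C'.Nonempty := by
      obtain ⟨S, hS⟩ := hDne
      obtain ⟨Y, hY, _⟩ := hcover S hS
      exact ⟨Y, hY⟩
    have hpair : ∀ Y ∈ C', ({(p Y).1, (p Y).2} : Finset α).card = 2 := by
      intro Y hY
      obtain ⟨_, _, hab⟩ := hp Y (hC'sub hY)
      rw [Finset.card_insert_of_notMem (by simpa using hab), Finset.card_singleton]
    have hWsub : ∀ Y, W Y ⊆ Y \ {(p Y).1, (p Y).2} := fun Y => Finset.filter_subset _ _
    have hWle : ∀ Y ∈ C', (W Y).card ≤ Y.card - 2 := by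
      intro Y hY
      obtain ⟨ha, hb, hab⟩ := hp Y (hC'sub hY)
      calc (W Y).card ≤ (Y \ {(p Y).1, (p Y).2}).card :=
            Finset.card_le_card (hWsub Y)
        _ = Y.card - 2 := by
            rw [Finset.card_sdiff_of_subset (by
              intro x hx
              simp only [Finset.mem_insert, Finset.mem_singleton] at hx
              rcases hx with rfl | rfl
              · exact ha
              · exact hb), hpair Y hY]
    -- h1 : D.card ≤ ∑ |W Y|
    have h1 : D.card ≤ ∑ Y ∈ C', (W Y).card := by
      calc D.card ≤ (C'.biUnion (fun Y => CY Y ∩ D)).card := by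
            apply Finset.card_le_card
            intro S hS
            obtain ⟨Y, hY, hSY⟩ := hcover S hS
            exact Finset.mem_biUnion.mpr ⟨Y, hY, Finset.mem_inter.mpr ⟨hSY, hS⟩⟩
        _ ≤ ∑ Y ∈ C', (CY Y ∩ D).card := Finset.card_biUnion_le
        _ ≤ ∑ Y ∈ C', (W Y).card := by
            apply Finset.sum_le_sum
            intro Y _
            calc (CY Y ∩ D).card
                ≤ ((W Y).image (fun y => ({(p Y).1, (p Y).2, y} : Finset α))).card := by
                  apply Finset.card_le_card
                  intro S hS
                  obtain ⟨hS1, hS2⟩ := Finset.mem_inter.mp hS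
                  obtain ⟨y, hy, rfl⟩ := Finset.mem_image.mp hS1
                  exact Finset.mem_image.mpr ⟨y, Finset.mem_filter.mpr ⟨hy, hS2⟩, rfl⟩
              _ ≤ (W Y).card := Finset.card_image_le
    -- h2
    have h2 := hcond C' hC'sub hC'ne
    -- h3
    have h3 : (C'.sup id).card ≤ (D.sup id).card +
        ∑ Y ∈ C', (Y.card - 2 - (W Y).card) := by
      have hsubset : C'.sup id ⊆ D.sup id ∪
          C'.biUnion (fun Y => Y \ (insert (p Y).1 (insert (p Y).2 (W Y)))) := by
        intro x hx
        obtain ⟨Y, hY, hxY⟩ := Finset.mem_sup.mp hx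
        simp only [id] at hxY
        by_cases hxm : x ∈ insert (p Y).1 (insert (p Y).2 (W Y))
        · apply Finset.mem_union_left
          obtain ⟨S, hSmem⟩ := (Finset.mem_filter.mp hY).2
          obtain ⟨hS1, hS2⟩ := Finset.mem_inter.mp hSmem
          obtain ⟨y, hy, rfl⟩ := Finset.mem_image.mp hS1
          simp only [Finset.mem_insert] at hxm
          rcases hxm with rfl | rfl | hxW
          · exact Finset.mem_sup.mpr ⟨_, hS2, by simp⟩
          · exact Finset.mem_sup.mpr ⟨_, hS2, by simp⟩
          · have := (Finset.mem_filter.mp hxW).2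
            exact Finset.mem_sup.mpr ⟨_, this, by simp⟩
        · exact Finset.mem_union_right _
            (Finset.mem_biUnion.mpr ⟨Y, hY, Finset.mem_sdiff.mpr ⟨hxY, hxm⟩⟩)
      calc (C'.sup id).card ≤ (D.sup id ∪
            C'.biUnion (fun Y => Y \ (insert (p Y).1 (insert (p Y).2 (W Y))))).card :=
            Finset.card_le_card hsubset
        _ ≤ (D.sup id).card +
            (C'.biUnion (fun Y => Y \ (insert (p Y).1 (insert (p Y).2 (W Y))))).card :=
            Finset.card_union_le _ _
        _ ≤ (D.sup id).card + ∑ Y ∈ C', (Y.card - 2 - (W Y).card) := by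
            gcongr
            calc (C'.biUnion (fun Y => Y \ (insert (p Y).1 (insert (p Y).2 (W Y))))).card
                ≤ ∑ Y ∈ C', (Y \ (insert (p Y).1 (insert (p Y).2 (W Y)))).card :=
                  Finset.card_biUnion_le
              _ ≤ ∑ Y ∈ C', (Y.card - 2 - (W Y).card) := by
                  apply Finset.sum_le_sum
                  intro Y hY
                  obtain ⟨ha, hb, hab⟩ := hp Y (hC'sub hY)
                  have hWY : W Y ⊆ Y := fun y hy =>
                    (Finset.mem_sdiff.mp (hWsub Y hy)).1
                  have hins : insert (p Y).1 (insert (p Y).2 (W Y)) ⊆ Y := by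
                    intro z hz
                    simp only [Finset.mem_insert] at hz
                    rcases hz with rfl | rfl | hz
                    · exact ha
                    · exact hb
                    · exact hWY hz
                  have haW : (p Y).1 ∉ W Y := fun h => by
                    have := (Finset.mem_sdiff.mp (hWsub Y h)).2; simp at this
                  have hbW : (p Y).2 ∉ W Y := fun h => by
                    have := (Finset.mem_sdiff.mp (hWsub Y h)).2; simp at this
                  have hcardins : (insert (p Y).1 (insert (p Y).2 (W Y))).card
                      = 2 + (W Y).card := by
                    rw [Finset.card_insert_of_notMem (by
                        simp only [Finset.mem_insert]
                        push_neg
                        exact ⟨hab, haW⟩),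
                      Finset.card_insert_of_notMem hbW]
                    ring
                  rw [Finset.card_sdiff_of_subset hins, hcardins, Nat.sub_sub]
      -- done h3
    -- h4
    have h4 : ∑ Y ∈ C', (Y.card - 2) =
        ∑ Y ∈ C', (W Y).card + ∑ Y ∈ C', (Y.card - 2 - (W Y).card) := by
      rw [← Finset.sum_add_distrib]
      apply Finset.sum_congr rfl
      intro Y hY
      have := hWle Y hY
      have := hcard Y (hC'sub hY)
      omega
    omega
end

section
/- Let T be a finite tree with leaf set X, all other vertices of degree 3, and let Y ⊆ X with |Y| ≥ 3, Y = {y₁,…,y_m}. Suppose the medians med_T({y₁,y₂,y_j}) for 3 ≤ j ≤ m are pairwise distinct vertices. Then every vertex of T that is a median of some 3-element subset of Y equals med_T({y₁,y₂,y}) for some y ∈ Y − {y₁,y₂}; i.e., med_T(Y) = {med_T({y₁,y₂,y_j}) : 3 ≤ j ≤ m}. -/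
namespace TreeMedianAux

open SimpleGraph Walk

set_option maxHeartbeats 2000000
set_option linter.unusedSectionVars false

variable {V : Type*} [DecidableEq V] {T : SimpleGraph V}

lemma dC (T : SimpleGraph V) (x y : V) : T.dist x y = T.dist y x := by
  apply SimpleGraph.dist_comm

/-- In a tree, every path has length equal to the distance between its endpoints. -/
lemma tlen (hT : T.IsTree) {u v : V} (p : T.Walk u v) (hp : p.IsPath) :
    p.length = T.dist u v := by
  obtain ⟨q, hq, hl⟩ := hT.isConnected.exists_path_of_dist u v
  obtain ⟨p0, _, huniq⟩ := hT.existsUnique_path u v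
  rw [show p = q from (huniq p hp).trans (huniq q hq).symm]
  exact hl

/-- A vertex on a path is metrically between the endpoints. -/
lemma btw_of_mem (hT : T.IsTree) {u v z : V} (p : T.Walk u v) (hp : p.IsPath)
    (hz : z ∈ p.support) : T.dist u z + T.dist z v = T.dist u v := by
  have h1 := tlen hT p hp
  have h2 : (p.takeUntil z hz).length + (p.dropUntil z hz).length = p.length := by
    rw [← Walk.length_append, Walk.take_spec]
  have d1 : T.dist u z ≤ (p.takeUntil z hz).length := SimpleGraph.dist_le _
  have d2 : T.dist z v ≤ (p.dropUntil z hz).length := SimpleGraph.dist_le _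
  have tri : T.dist u v ≤ T.dist u z + T.dist z v := hT.isConnected.dist_triangle
  omega

/-- A vertex metrically between the endpoints of a path lies on the path. -/
lemma mem_of_btw (hT : T.IsTree) {u v z : V} (p : T.Walk u v) (hp : p.IsPath)
    (h : T.dist u z + T.dist z v = T.dist u v) : z ∈ p.support := by
  obtain ⟨w1, hw1, hl1⟩ := hT.isConnected.exists_path_of_dist u z
  obtain ⟨w2, hw2, hl2⟩ := hT.isConnected.exists_path_of_dist z v
  have hlen : (w1.append w2).length = T.dist u v := by
    rw [Walk.length_append, hl1, hl2, h]
  have hW : (w1.append w2).IsPath := Walk.isPath_of_length_eq_dist _ hlen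
  obtain ⟨p0, _, huniq⟩ := hT.existsUnique_path u v
  have hpe : w1.append w2 = p := (huniq _ hW).trans (huniq p hp).symm
  rw [← hpe]
  exact (Walk.mem_support_append_iff _ _).mpr (Or.inl w1.end_mem_support)

/-- Splitting: if `z` and `c` are both between `u` and `v`, then `z` is between
`u` and `c`, or between `c` and `v`. -/
lemma splitL (hT : T.IsTree) {u v z c : V}
    (hz : T.dist u z + T.dist z v = T.dist u v)
    (hc : T.dist u c + T.dist c v = T.dist u v) :
    (T.dist u z + T.dist z c = T.dist u c) ∨ (T.dist c z + T.dist z v = T.dist c v) := by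
  obtain ⟨p, hp, _⟩ := hT.existsUnique_path u v
  have hcm : c ∈ p.support := mem_of_btw hT p hp hc
  have hzm : z ∈ p.support := mem_of_btw hT p hp hz
  have hsplit : z ∈ (p.takeUntil c hcm).support ∨ z ∈ (p.dropUntil c hcm).support := by
    rw [← Walk.mem_support_append_iff, Walk.take_spec]
    exact hzm
  rcases hsplit with h | h
  · exact Or.inl (btw_of_mem hT _ (hp.takeUntil hcm) h)
  · exact Or.inr (btw_of_mem hT _ (hp.dropUntil hcm) h)

/-- Comparability on a geodesic: if `z, c` are between `a` and `b` with
`d a z ≤ d a c` then `z` is between `a` and `c`. -/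
lemma F2 (hT : T.IsTree) {a b z c : V}
    (h1 : T.dist a z + T.dist z b = T.dist a b)
    (h2 : T.dist a c + T.dist c b = T.dist a b)
    (h3 : T.dist a z ≤ T.dist a c) :
    T.dist a z + T.dist z c = T.dist a c := by
  rcases splitL hT h1 h2 with h | h
  · exact h
  · have c1 := dC T c z
    have c2 := dC T z c
    omega

/-- Projection lemma: if `gx` is the median of `a, b, x` and `z` is on the
`a`-`b` geodesic, then the geodesic from `x` to `z` passes through `gx`. -/
lemma step2 (hT : T.IsTree) {a b x gx z : V}
    (p1 : T.dist a gx + T.dist gx b = T.dist a b)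
    (p2 : T.dist a gx + T.dist gx x = T.dist a x)
    (p3 : T.dist b gx + T.dist gx x = T.dist b x)
    (hz : T.dist a z + T.dist z b = T.dist a b) :
    T.dist x z = T.dist x gx + T.dist gx z := by
  have t1 : T.dist x z ≤ T.dist x gx + T.dist gx z := hT.isConnected.dist_triangle
  rcases le_total (T.dist a z) (T.dist a gx) with hle | hle
  · have e1 : T.dist a z + T.dist z gx = T.dist a gx := F2 hT hz p1 hle
    have t2 : T.dist x a ≤ T.dist x z + T.dist z a := hT.isConnected.dist_triangle
    have c1 := dC T x a
    have c2 := dC T gx x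
    have c3 := dC T z a
    have c4 := dC T z gx
    omega
  · have c1 := dC T a z
    have c2 := dC T z b
    have c3 := dC T a b
    have c4 := dC T a gx
    have c5 := dC T gx b
    have h1' : T.dist b z + T.dist z a = T.dist b a := by omega
    have h2' : T.dist b gx + T.dist gx a = T.dist b a := by omega
    have h3' : T.dist b z ≤ T.dist b gx := by omega
    have e1 := F2 hT h1' h2' h3'
    have t2 : T.dist x b ≤ T.dist x z + T.dist z b := hT.isConnected.dist_triangle
    have c6 := dC T x b
    have c7 := dC T gx x
    have c8 := dC T z gx
    omega

/-- Branch lemma: if `z` is on the geodesic from `gx` to `x` (the branch of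
`x`), then the geodesic from `z` to any point `w'` on the `a`-`b` geodesic
passes through `gx`. -/
lemma F4 (hT : T.IsTree) {a b x gx z w' : V}
    (p1 : T.dist a gx + T.dist gx b = T.dist a b)
    (p2 : T.dist a gx + T.dist gx x = T.dist a x)
    (p3 : T.dist b gx + T.dist gx x = T.dist b x)
    (hz : T.dist gx z + T.dist z x = T.dist gx x)
    (hw : T.dist a w' + T.dist w' b = T.dist a b) :
    T.dist z w' = T.dist z gx + T.dist gx w' := by
  have s := step2 hT p1 p2 p3 hw
  have t1 : T.dist x w' ≤ T.dist x z + T.dist z w' := hT.isConnected.dist_triangle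
  have t2 : T.dist z w' ≤ T.dist z gx + T.dist gx w' := hT.isConnected.dist_triangle
  have c1 := dC T gx z
  have c2 := dC T z x
  have c3 := dC T gx x
  omega

/-- First-hit extraction along a path. -/
lemma FH (pred : V → Prop) [DecidablePred pred] :
    ∀ {u w : V} (P : T.Walk u w), P.IsPath → pred w →
      ∃ (c : V) (P1 : T.Walk u c), P1.IsPath ∧ pred c ∧ c ∈ P.support ∧
        (∀ z ∈ P1.support, pred z → z = c) ∧ (∀ z ∈ P1.support, z ∈ P.support) := by
  intro u w P
  induction P with
  | nil =>
    intro _ hw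
    refine ⟨_, Walk.nil, Walk.IsPath.nil, hw, ?_, ?_, ?_⟩ <;> simp
  | @cons x y w' hadj P' ih =>
    intro hP hw
    have hP' : P'.IsPath := hP.of_cons
    by_cases hx : pred x
    · refine ⟨x, Walk.nil, Walk.IsPath.nil, hx, Walk.start_mem_support _, ?_, ?_⟩ <;>
        simp [Walk.start_mem_support]
    · obtain ⟨c, P1, h1, h2, h3, h4, h5⟩ := ih hP' hw
      refine ⟨c, Walk.cons hadj P1, ?_, h2, ?_, ?_, ?_⟩
      · rw [Walk.cons_isPath_iff]
        exact ⟨h1, fun hmem => ((Walk.cons_isPath_iff _ _).mp hP).2 (h5 _ hmem)⟩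
      · rw [Walk.support_cons]
        exact List.mem_cons_of_mem _ h3
      · intro z hz hpz
        rw [Walk.support_cons, List.mem_cons] at hz
        rcases hz with rfl | hz
        · exact absurd hpz hx
        · exact h4 z hz hpz
      · intro z hz
        rw [Walk.support_cons, List.mem_cons] at hz
        rw [Walk.support_cons]
        rcases hz with rfl | hz
        · exact List.mem_cons_self
        · exact List.mem_cons_of_mem _ (h5 z hz)

/-- Existence of medians in a tree. -/
lemma MEX (hT : T.IsTree) (u v a : V) :
    ∃ c : V, T.dist u c + T.dist c a = T.dist u a ∧
      T.dist v c + T.dist c a = T.dist v a ∧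
      T.dist u c + T.dist c v = T.dist u v := by
  classical
  obtain ⟨P, hP, _⟩ := hT.existsUnique_path u a
  obtain ⟨Q, hQ, _⟩ := hT.existsUnique_path v a
  obtain ⟨c, P1, hP1, hcQ, hcP, hmin, hsub⟩ :=
    FH (fun z => z ∈ Q.support) P hP Q.end_mem_support
  refine ⟨c, btw_of_mem hT P hP hcP, btw_of_mem hT Q hQ hcQ, ?_⟩
  have hQ1 : (Q.takeUntil c hcQ).IsPath := hQ.takeUntil hcQ
  set Q1 := Q.takeUntil c hcQ with hQ1def
  have hrevnodup := hQ1.reverse.support_nodup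
  rw [Walk.support_eq_cons] at hrevnodup
  have hW : (P1.append Q1.reverse).IsPath := by
    rw [Walk.isPath_def, Walk.support_append, List.nodup_append]
    refine ⟨hP1.support_nodup, (List.nodup_cons.mp hrevnodup).2, ?_⟩
    intro z hz1 z' hz2 hzz
    subst hzz
    have hz3 : z ∈ Q1.reverse.support := List.mem_of_mem_tail hz2
    rw [Walk.support_reverse, List.mem_reverse] at hz3
    have hzQ : z ∈ Q.support := Q.support_takeUntil_subset hcQ hz3
    have hzc : z = c := hmin z hz1 hzQ
    subst hzc
    exact (List.nodup_cons.mp hrevnodup).1 hz2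
  have e1 := tlen hT _ hW
  rw [Walk.length_append, Walk.length_reverse] at e1
  rw [tlen hT P1 hP1, tlen hT Q1 hQ1] at e1
  have c1 := dC T c v
  omega

/-- In a tree a leaf cannot lie strictly between two other vertices. -/
lemma L_leaf [Fintype V] [DecidableRel T.Adj] (hT : T.IsTree) {p q x : V}
    (hdeg : T.degree x = 1) (hp : p ≠ x) (hq : q ≠ x)
    (h : T.dist p x + T.dist x q = T.dist p q) : False := by
  obtain ⟨P, hP, _⟩ := hT.existsUnique_path p q
  have hx : x ∈ P.support := mem_of_btw hT P hP h
  have h2 := hP.support_nodup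
  rw [← Walk.take_spec P hx, Walk.support_append] at h2
  obtain ⟨hnd1, hnd2, hdisj⟩ := List.nodup_append.mp h2
  have hdropnil : ¬ (P.dropUntil x hx).Nil := Walk.not_nil_of_ne (Ne.symm hq)
  obtain ⟨n1, hadj1, dr', hdr'⟩ := Walk.not_nil_iff.mp hdropnil
  have hn1 : n1 ∈ (P.dropUntil x hx).support.tail := by
    rw [hdr', Walk.support_cons]
    exact dr'.start_mem_support
  have htakenil : ¬ (P.takeUntil x hx).reverse.Nil := Walk.not_nil_of_ne (Ne.symm hp)
  obtain ⟨n2, hadj2, r', hr'⟩ := Walk.not_nil_iff.mp htakenil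
  have hn2 : n2 ∈ (P.takeUntil x hx).support := by
    have hmem : n2 ∈ (P.takeUntil x hx).reverse.support := by
      rw [hr', Walk.support_cons]
      exact List.mem_cons_of_mem _ r'.start_mem_support
    rwa [Walk.support_reverse, List.mem_reverse] at hmem
  have hne : n2 ≠ n1 := hdisj _ hn2 _ hn1
  have hsub : ({n2, n1} : Finset V) ⊆ T.neighborFinset x := by
    intro z hz
    rcases Finset.mem_insert.mp hz with rfl | hz
    · exact (T.mem_neighborFinset x z).mpr hadj2
    · rw [Finset.mem_singleton] at hz
      subst hz
      exact (T.mem_neighborFinset x z).mpr hadj1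
  have hcard : 2 ≤ T.degree x := by
    have hle := Finset.card_le_card hsub
    rw [Finset.card_insert_of_notMem (by simp [hne]), Finset.card_singleton] at hle
    rw [← SimpleGraph.card_neighborFinset_eq_degree]
    exact hle
  omega

/-- KEY lemma: for two leaves `u, v` whose medians with `{a,b}` are `gu, gv`,
with `gu` closer to `a` and `gu ≠ gv`, the `u`-`v` geodesic passes through
`gu` and then `gv`. -/
lemma KEY (hT : T.IsTree) {a b u v gu gv : V}
    (pu1 : T.dist a gu + T.dist gu b = T.dist a b)
    (pu2 : T.dist a gu + T.dist gu u = T.dist a u)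
    (pu3 : T.dist b gu + T.dist gu u = T.dist b u)
    (pv1 : T.dist a gv + T.dist gv b = T.dist a b)
    (pv2 : T.dist a gv + T.dist gv v = T.dist a v)
    (pv3 : T.dist b gv + T.dist gv v = T.dist b v)
    (hord : T.dist a gu + T.dist gu gv = T.dist a gv)
    (hne : gu ≠ gv) :
    T.dist u v = T.dist u gu + T.dist gu gv + T.dist gv v := by
  obtain ⟨c, c1, c2, c3⟩ := MEX hT u v a
  have cc1 := dC T a gu
  have cc2 := dC T gu u
  have cc3 := dC T a u
  have cc4 := dC T a gv
  have cc5 := dC T gv v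
  have cc6 := dC T a v
  have cc7 := dC T gv gu
  have bua : T.dist u gu + T.dist gu a = T.dist u a := by omega
  have svgu : T.dist v gu = T.dist v gv + T.dist gv gu := step2 hT pv1 pv2 pv3 pu1
  have bva : T.dist v gu + T.dist gu a = T.dist v a := by omega
  have sp1 := splitL hT c1 bua
  have sp2 := splitL hT c2 bva
  have t_uv : T.dist u v ≤ T.dist u gu + T.dist gu v := hT.isConnected.dist_triangle
  have t_guv : T.dist gu v ≤ T.dist gu gv + T.dist gv v := hT.isConnected.dist_triangle
  have trunkCase : T.dist gu c + T.dist c a = T.dist gu a →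
      T.dist u v = T.dist u gu + T.dist gu gv + T.dist gv v := by
    intro hcg
    have cc8 := dC T a c
    have cc9 := dC T gu c
    have cc10 := dC T gu b
    have hacb : T.dist a c + T.dist c b = T.dist a b := by
      have t3 : T.dist a b ≤ T.dist a c + T.dist c b := hT.isConnected.dist_triangle
      have t4 : T.dist c b ≤ T.dist c gu + T.dist gu b := hT.isConnected.dist_triangle
      omega
    have suc := step2 hT pu1 pu2 pu3 hacb
    have svc := step2 hT pv1 pv2 pv3 hacb
    have hle : T.dist a c ≤ T.dist a gv := by omega
    have hacgv := F2 hT hacb pv1 hle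
    have cc11 := dC T c v
    have cc12 := dC T gv c
    omega
  rcases sp1 with B1 | hcg
  · rcases sp2 with B2 | hcg
    · have cc9 := dC T gu c
      have cc13 := dC T c u
      have cc14 := dC T u c
      have hzu : T.dist gu c + T.dist c u = T.dist gu u := by omega
      have F4a := F4 hT pu1 pu2 pu3 hzu pv1
      have bvgv : T.dist v gv + T.dist gv gu = T.dist v gu := by omega
      have sp3 := splitL hT B2 bvgv
      have cc15 := dC T gv c
      have cc16 := dC T c gv
      have cc17 := dC T c v
      rcases sp3 with L | R
      · exfalso
        have h0 : T.dist gu gv = 0 := by omega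
        exact hne (hT.isConnected.dist_eq_zero_iff.mp h0)
      · omega
    · exact trunkCase hcg
  · exact trunkCase hcg

/-- Half of the core argument: the median `m` of `{u,v,w}` lies at `gv`,
given that `m` is between `u` and `gv`. -/
lemma half (hT : T.IsTree) {a b u v w gu gv gw m : V}
    (pu1 : T.dist a gu + T.dist gu b = T.dist a b)
    (pu2 : T.dist a gu + T.dist gu u = T.dist a u)
    (pu3 : T.dist b gu + T.dist gu u = T.dist b u)
    (pv1 : T.dist a gv + T.dist gv b = T.dist a b)
    (pv2 : T.dist a gv + T.dist gv v = T.dist a v)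
    (pv3 : T.dist b gv + T.dist gv v = T.dist b v)
    (pw1 : T.dist a gw + T.dist gw b = T.dist a b)
    (pw2 : T.dist a gw + T.dist gw w = T.dist a w)
    (pw3 : T.dist b gw + T.dist gw w = T.dist b w)
    (huv : T.dist a gu + T.dist gu gv = T.dist a gv)
    (hvw : T.dist a gv + T.dist gv gw = T.dist a gw)
    (nuv : gu ≠ gv)
    (key_uv : T.dist u v = T.dist u gu + T.dist gu gv + T.dist gv v)
    (key_vw : T.dist v w = T.dist v gv + T.dist gv gw + T.dist gw w)
    (m1 : T.dist u m + T.dist m v = T.dist u v)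
    (m3 : T.dist v m + T.dist m w = T.dist v w)
    (hcase : T.dist u m + T.dist m gv = T.dist u gv) :
    T.dist m gv = 0 := by
  have sugv : T.dist u gv = T.dist u gu + T.dist gu gv := step2 hT pu1 pu2 pu3 pv1
  have sp := splitL hT hcase sugv.symm
  have cmgu := dC T m gu
  have cmgv := dC T m gv
  have cmgw := dC T m gw
  have cmv := dC T m v
  have cmw := dC T m w
  have cgvv := dC T gv v
  have cgww := dC T gw w
  rcases sp with hbr | e1
  · exfalso
    have tri1 : T.dist w gu ≤ T.dist w m + T.dist m gu := hT.isConnected.dist_triangle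
    have swgu : T.dist w gu = T.dist w gw + T.dist gw gu := step2 hT pw1 pw2 pw3 pu1
    have hle : T.dist a gu ≤ T.dist a gw := by omega
    have hugw := F2 hT pu1 pw1 hle
    have cgwgu := dC T gw gu
    have h0 : T.dist gu gv = 0 := by omega
    exact nuv (hT.isConnected.dist_eq_zero_iff.mp h0)
  · have hamb : T.dist a m + T.dist m b = T.dist a b := by
      have t3 : T.dist a b ≤ T.dist a m + T.dist m b := hT.isConnected.dist_triangle
      have t4 : T.dist a m ≤ T.dist a gu + T.dist gu m := hT.isConnected.dist_triangle
      have t5 : T.dist m b ≤ T.dist m gv + T.dist gv b := hT.isConnected.dist_triangle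
      omega
    have sv : T.dist v m = T.dist v gv + T.dist gv m := step2 hT pv1 pv2 pv3 hamb
    have sw : T.dist w m = T.dist w gw + T.dist gw m := step2 hT pw1 pw2 pw3 hamb
    have disj0 : T.dist a m + T.dist m gu = T.dist a gu ∨
        T.dist a gu + T.dist gu m = T.dist a m := by
      rcases le_total (T.dist a m) (T.dist a gu) with hle | hle
      · exact Or.inl (F2 hT hamb pu1 hle)
      · exact Or.inr (F2 hT pu1 hamb hle)
    have disj1 : T.dist a m + T.dist m gv = T.dist a gv ∨
        T.dist a gv + T.dist gv m = T.dist a m := by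
      rcases le_total (T.dist a m) (T.dist a gv) with hle | hle
      · exact Or.inl (F2 hT hamb pv1 hle)
      · exact Or.inr (F2 hT pv1 hamb hle)
    have disj2 : T.dist a m + T.dist m gw = T.dist a gw ∨
        T.dist a gw + T.dist gw m = T.dist a m := by
      rcases le_total (T.dist a m) (T.dist a gw) with hle | hle
      · exact Or.inl (F2 hT hamb pw1 hle)
      · exact Or.inr (F2 hT pw1 hamb hle)
    have cvm := dC T v m
    have cwm := dC T w m
    omega

/-- Core: if the three projections are ordered along the `a`-`b` geodesic,
the median of `{u,v,w}` is the middle projection `gv`. -/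
lemma core (hT : T.IsTree) {a b u v w gu gv gw m : V}
    (pu1 : T.dist a gu + T.dist gu b = T.dist a b)
    (pu2 : T.dist a gu + T.dist gu u = T.dist a u)
    (pu3 : T.dist b gu + T.dist gu u = T.dist b u)
    (pv1 : T.dist a gv + T.dist gv b = T.dist a b)
    (pv2 : T.dist a gv + T.dist gv v = T.dist a v)
    (pv3 : T.dist b gv + T.dist gv v = T.dist b v)
    (pw1 : T.dist a gw + T.dist gw b = T.dist a b)
    (pw2 : T.dist a gw + T.dist gw w = T.dist a w)
    (pw3 : T.dist b gw + T.dist gw w = T.dist b w)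
    (huv : T.dist a gu + T.dist gu gv = T.dist a gv)
    (hvw : T.dist a gv + T.dist gv gw = T.dist a gw)
    (nuv : gu ≠ gv) (nvw : gv ≠ gw)
    (m1 : T.dist u m + T.dist m v = T.dist u v)
    (m2 : T.dist u m + T.dist m w = T.dist u w)
    (m3 : T.dist v m + T.dist m w = T.dist v w) :
    T.dist m gv = 0 := by
  have nuw : gu ≠ gw := by
    rintro rfl
    have c1 := dC T gu gv
    have h0 : T.dist gu gv = 0 := by omega
    exact nuv (hT.isConnected.dist_eq_zero_iff.mp h0)
  have hle : T.dist a gu ≤ T.dist a gw := by omega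
  have huw := F2 hT pu1 pw1 hle
  have key_uv := KEY hT pu1 pu2 pu3 pv1 pv2 pv3 huv nuv
  have key_vw := KEY hT pv1 pv2 pv3 pw1 pw2 pw3 hvw nvw
  have key_uw := KEY hT pu1 pu2 pu3 pw1 pw2 pw3 huw nuw
  have sugv : T.dist u gv = T.dist u gu + T.dist gu gv := step2 hT pu1 pu2 pu3 pv1
  have swgv : T.dist w gv = T.dist w gw + T.dist gw gv := step2 hT pw1 pw2 pw3 pv1
  have cgvw := dC T gv w
  have cgwgv := dC T gw gv
  have cgww := dC T gw w
  have hugvw : T.dist u gv + T.dist gv w = T.dist u w := by omega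
  have sp := splitL hT m2 hugvw
  rcases sp with h | h
  · exact half hT pu1 pu2 pu3 pv1 pv2 pv3 pw1 pw2 pw3 huv hvw nuv key_uv key_vw m1 m3 h
  · -- apply `half` with the roles of `a, b` and of `u, w` swapped
    have cab := dC T a b
    have cagu := dC T a gu
    have cagv := dC T a gv
    have cagw := dC T a gw
    have cgub := dC T gu b
    have cgvb := dC T gv b
    have cgwb := dC T gw b
    have cguu := dC T gu u
    have cgvv := dC T gv v
    have cguv := dC T gu v
    have cguw := dC T gu w
    have cgvgu := dC T gv gu
    have cgvgw := dC T gv gw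
    have cgugv := dC T gu gv
    have cgugw := dC T gu gw
    have cgwu := dC T gw u
    have cum := dC T u m
    have cvm := dC T v m
    have cwm := dC T w m
    have cmu := dC T m u
    have cmv := dC T m v
    have cmw := dC T m w
    have cuv := dC T u v
    have cvw := dC T v w
    have cuw := dC T u w
    have cuu := dC T u gu
    have cvgv := dC T v gv
    have cwgw := dC T w gw
    have cwgv := dC T w gv
    have cmgv := dC T m gv
    have pw1' : T.dist b gw + T.dist gw a = T.dist b a := by omega
    have pv1' : T.dist b gv + T.dist gv a = T.dist b a := by omega
    have pu1' : T.dist b gu + T.dist gu a = T.dist b a := by omega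
    have huv' : T.dist b gw + T.dist gw gv = T.dist b gv := by omega
    have hvw' : T.dist b gv + T.dist gv gu = T.dist b gu := by omega
    have key_uv' : T.dist w v = T.dist w gw + T.dist gw gv + T.dist gv v := by omega
    have key_vw' : T.dist v u = T.dist v gv + T.dist gv gu + T.dist gu u := by omega
    have m1' : T.dist w m + T.dist m v = T.dist w v := by omega
    have m3' : T.dist v m + T.dist m u = T.dist v u := by omega
    have hcase' : T.dist w m + T.dist m gv = T.dist w gv := by omega
    exact half hT pw1' pw3 pw2 pv1' pv3 pv2 pu1' pu3 pu2 huv' hvw' (Ne.symm nvw)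
      key_uv' key_vw' m1' m3' hcase'

/-- Core, unordered version: the median of `{u,v,w}` is one of the three
projections. -/
lemma core' (hT : T.IsTree) {a b u v w gu gv gw m : V}
    (pu1 : T.dist a gu + T.dist gu b = T.dist a b)
    (pu2 : T.dist a gu + T.dist gu u = T.dist a u)
    (pu3 : T.dist b gu + T.dist gu u = T.dist b u)
    (pv1 : T.dist a gv + T.dist gv b = T.dist a b)
    (pv2 : T.dist a gv + T.dist gv v = T.dist a v)
    (pv3 : T.dist b gv + T.dist gv v = T.dist b v)
    (pw1 : T.dist a gw + T.dist gw b = T.dist a b)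
    (pw2 : T.dist a gw + T.dist gw w = T.dist a w)
    (pw3 : T.dist b gw + T.dist gw w = T.dist b w)
    (nuv : gu ≠ gv) (nuw : gu ≠ gw) (nvw : gv ≠ gw)
    (m1 : T.dist u m + T.dist m v = T.dist u v)
    (m2 : T.dist u m + T.dist m w = T.dist u w)
    (m3 : T.dist v m + T.dist m w = T.dist v w) :
    T.dist m gu = 0 ∨ T.dist m gv = 0 ∨ T.dist m gw = 0 := by
  have cum := dC T u m
  have cvm := dC T v m
  have cwm := dC T w m
  have cmu := dC T m u
  have cmv := dC T m v
  have cmw := dC T m w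
  have cuv := dC T u v
  have cvw := dC T v w
  have cuw := dC T u w
  have m1' : T.dist v m + T.dist m u = T.dist v u := by omega
  have m2' : T.dist w m + T.dist m u = T.dist w u := by omega
  have m3' : T.dist w m + T.dist m v = T.dist w v := by omega
  rcases le_total (T.dist a gu) (T.dist a gv) with h1 | h1 <;>
    rcases le_total (T.dist a gv) (T.dist a gw) with h2 | h2 <;>
    rcases le_total (T.dist a gu) (T.dist a gw) with h3 | h3
  · -- α ≤ β ≤ γ : order (u, v, w), median gv
    exact Or.inr (Or.inl (core hT pu1 pu2 pu3 pv1 pv2 pv3 pw1 pw2 pw3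
      (F2 hT pu1 pv1 h1) (F2 hT pv1 pw1 h2) nuv nvw m1 m2 m3))
  · -- α ≤ β, β ≤ γ, γ ≤ α : degenerate, contradiction
    exfalso
    have e := F2 hT pu1 pv1 h1
    have h0 : T.dist gu gv = 0 := by omega
    exact nuv (hT.isConnected.dist_eq_zero_iff.mp h0)
  · -- α ≤ β, γ ≤ β, α ≤ γ : order (u, w, v), median gw
    exact Or.inr (Or.inr (core hT pu1 pu2 pu3 pw1 pw2 pw3 pv1 pv2 pv3
      (F2 hT pu1 pw1 h3) (F2 hT pw1 pv1 h2) nuw (Ne.symm nvw) m2 m1 m3'))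
  · -- γ ≤ α ≤ β : order (w, u, v), median gu
    exact Or.inl (core hT pw1 pw2 pw3 pu1 pu2 pu3 pv1 pv2 pv3
      (F2 hT pw1 pu1 h3) (F2 hT pu1 pv1 h1) (Ne.symm nuw) nuv m2' m3' m1)
  · -- β ≤ α, β ≤ γ, α ≤ γ : order (v, u, w), median gu
    exact Or.inl (core hT pv1 pv2 pv3 pu1 pu2 pu3 pw1 pw2 pw3
      (F2 hT pv1 pu1 h1) (F2 hT pu1 pw1 h3) (Ne.symm nuv) nuw m1' m3 m2)
  · -- β ≤ α, β ≤ γ, γ ≤ α : order (v, w, u), median gw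
    exact Or.inr (Or.inr (core hT pv1 pv2 pv3 pw1 pw2 pw3 pu1 pu2 pu3
      (F2 hT pv1 pw1 h2) (F2 hT pw1 pu1 h3) nvw (Ne.symm nuw) m3 m1' m2'))
  · -- β ≥ α? degenerate : γ ≤ β ≤ α ≤ γ, contradiction
    exfalso
    have e := F2 hT pw1 pv1 h2
    have h0 : T.dist gw gv = 0 := by omega
    exact nvw ((hT.isConnected.dist_eq_zero_iff.mp h0)).symm
  · -- γ ≤ β ≤ α : order (w, v, u), median gv
    exact Or.inr (Or.inl (core hT pw1 pw2 pw3 pv1 pv2 pv3 pu1 pu2 pu3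
      (F2 hT pw1 pv1 h2) (F2 hT pv1 pu1 h1) (Ne.symm nvw) (Ne.symm nuv) m3' m2' m1'))

end TreeMedianAux

open TreeMedianAux in
set_option maxHeartbeats 2000000 in
theorem stmt_17 {V : Type*} [Fintype V] [DecidableEq V]
    (T : SimpleGraph V) [DecidableRel T.Adj] (hT : T.IsTree)
    (X : Finset V) (hleaf : ∀ v : V, T.degree v = 1 ↔ v ∈ X)
    (hdeg3 : ∀ v : V, v ∉ X → T.degree v = 3)
    (Y : Finset V) (hYX : Y ⊆ X) (hY : 3 ≤ Y.card)
    (a b : V) (ha : a ∈ Y) (hb : b ∈ Y) (hab : a ≠ b)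
    (g : V → V) (hg : ∀ y ∈ Y \ {a, b}, isMedianOf T {a, b, y} (g y))
    (hginj : Set.InjOn g (Y \ {a, b} : Finset V)) :
    ∀ m : V, (∃ S ⊆ Y, S.card = 3 ∧ isMedianOf T S m) ↔
      ∃ y ∈ Y \ {a, b}, isMedianOf T {a, b, y} m := by
  classical
  have conn := hT.isConnected
  have hdeg : ∀ y ∈ Y, T.degree y = 1 := fun y hy => (hleaf y).mpr (hYX hy)
  intro m
  constructor
  · rintro ⟨S, hSY, hcard, hmed⟩
    obtain ⟨x1, x2, x3, h12, h13, h23, rfl⟩ := Finset.card_eq_three.mp hcard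
    have hx1 : x1 ∈ Y := hSY (by simp)
    have hx2 : x2 ∈ Y := hSY (by simp)
    have hx3 : x3 ∈ Y := hSY (by simp)
    set G : V → V := fun x => if x = a then a else if x = b then b else g x with hGdef
    have hPT : ∀ x ∈ Y, (T.dist a (G x) + T.dist (G x) b = T.dist a b) ∧
        (T.dist a (G x) + T.dist (G x) x = T.dist a x) ∧
        (T.dist b (G x) + T.dist (G x) x = T.dist b x) := by
      intro x hxY
      by_cases hxa : x = a
      · subst hxa
        have hGx : G x = x := by simp [hGdef]
        rw [hGx]
        simp [SimpleGraph.dist_self]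
      · by_cases hxb : x = b
        · subst hxb
          have hGx : G x = x := by simp [hGdef, hxa]
          rw [hGx]
          simp [SimpleGraph.dist_self]
        · have hx' : x ∈ Y \ {a, b} := by
            simp [Finset.mem_sdiff, hxY, hxa, hxb]
          have hmx := hg x hx'
          have hGx : G x = g x := by simp [hGdef, hxa, hxb]
          rw [hGx]
          have ya : a ∈ ({a, b, x} : Finset V) := by simp
          have yb : b ∈ ({a, b, x} : Finset V) := by simp
          have yx : x ∈ ({a, b, x} : Finset V) := by simp
          exact ⟨hmx a ya b yb hab, hmx a ya x yx (Ne.symm hxa), hmx b yb x yx (Ne.symm hxb)⟩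
    have hGnotab : ∀ x ∈ Y, x ≠ a → x ≠ b → G x ≠ a ∧ G x ≠ b := by
      intro x hx hxa hxb
      obtain ⟨p1, p2, p3⟩ := hPT x hx
      constructor
      · intro hGa
        rw [hGa] at p3
        exact L_leaf hT (hdeg a ha) (Ne.symm hab) hxa p3
      · intro hGb
        rw [hGb] at p2
        exact L_leaf hT (hdeg b hb) hab hxb p2
    have hGY : ∀ x ∈ Y, x ≠ a → x ≠ b → G x = g x := by
      intro x _ hxa hxb
      simp [hGdef, hxa, hxb]
    have hGa : G a = a := by simp [hGdef]
    have hGb : G b = b := by simp [hGdef, Ne.symm hab]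
    have hGne : ∀ x ∈ Y, ∀ x' ∈ Y, x ≠ x' → G x ≠ G x' := by
      intro x hx x' hx' hne
      by_cases hxa : x = a
      · subst hxa
        rw [hGa]
        by_cases hxb' : x' = b
        · subst hxb'; rw [hGb]; exact hab
        · exact Ne.symm ((hGnotab x' hx' (Ne.symm hne) hxb').1)
      · by_cases hxb : x = b
        · subst hxb
          rw [hGb]
          by_cases hxa' : x' = a
          · subst hxa'; rw [hGa]; exact Ne.symm hab
          · exact Ne.symm ((hGnotab x' hx' hxa' (Ne.symm hne)).2)
        · by_cases hxa' : x' = a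
          · subst hxa'; rw [hGa]; exact (hGnotab x hx hxa hxb).1
          · by_cases hxb' : x' = b
            · subst hxb'; rw [hGb]; exact (hGnotab x hx hxa hxb).2
            · rw [hGY x hx hxa hxb, hGY x' hx' hxa' hxb']
              intro he
              exact hne (hginj (by simp [Finset.mem_sdiff, hx, hxa, hxb])
                (by simp [Finset.mem_sdiff, hx', hxa', hxb']) he)
    have m12 := hmed x1 (by simp) x2 (by simp) h12
    have m13 := hmed x1 (by simp) x3 (by simp) h13
    have m23 := hmed x2 (by simp) x3 (by simp) h23
    obtain ⟨pa1, pa2, pa3⟩ := hPT x1 hx1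
    obtain ⟨pb1, pb2, pb3⟩ := hPT x2 hx2
    obtain ⟨pc1, pc2, pc3⟩ := hPT x3 hx3
    have hres := core' hT pa1 pa2 pa3 pb1 pb2 pb3 pc1 pc2 pc3
      (hGne x1 hx1 x2 hx2 h12) (hGne x1 hx1 x3 hx3 h13) (hGne x2 hx2 x3 hx3 h23)
      m12 m13 m23
    have FIN : ∀ x y z : V, x ∈ Y → y ≠ x → z ≠ x →
        (T.dist y m + T.dist m z = T.dist y z) → T.dist m (G x) = 0 →
        ∃ y' ∈ Y \ ({a, b} : Finset V), isMedianOf T {a, b, y'} m := by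
      intro x y z hxY hyx hzx hmedyz h0
      have hm : m = G x := conn.dist_eq_zero_iff.mp h0
      by_cases hxa : x = a
      · exfalso
        subst hxa
        rw [hGa] at hm
        rw [hm] at hmedyz
        exact L_leaf hT (hdeg x ha) hyx hzx hmedyz
      · by_cases hxb : x = b
        · exfalso
          subst hxb
          rw [hGb] at hm
          rw [hm] at hmedyz
          exact L_leaf hT (hdeg x hb) hyx hzx hmedyz
        · refine ⟨x, by simp [Finset.mem_sdiff, hxY, hxa, hxb], ?_⟩
          rw [hm, hGY x hxY hxa hxb]
          exact hg x (by simp [Finset.mem_sdiff, hxY, hxa, hxb])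
    rcases hres with h0 | h0 | h0
    · exact FIN x1 x2 x3 hx1 (Ne.symm h12) (Ne.symm h13) m23 h0
    · exact FIN x2 x1 x3 hx2 h12 (Ne.symm h23) m13 h0
    · exact FIN x3 x1 x2 hx3 h13 h23 m12 h0
  · rintro ⟨y, hy, hmy⟩
    have hyY : y ∈ Y := (Finset.mem_sdiff.mp hy).1
    have hyab := (Finset.mem_sdiff.mp hy).2
    have hya : y ≠ a := by intro e; exact hyab (by simp [e])
    have hyb : y ≠ b := by intro e; exact hyab (by simp [e])
    refine ⟨{a, b, y}, ?_, ?_, hmy⟩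
    · intro z hz
      simp only [Finset.mem_insert, Finset.mem_singleton] at hz
      rcases hz with rfl | rfl | rfl
      · exact ha
      · exact hb
      · exact hyY
    · rw [Finset.card_insert_of_notMem (by simp [hab, Ne.symm hya]),
        Finset.card_insert_of_notMem (by simp [Ne.symm hyb]), Finset.card_singleton]
end
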